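/- Let β > 2 be a real number. Then there exists a natural number Δ₀ such that for every natural number Δ ≥ Δ₀, (∑_{i=1}^{Δ} i^{−β} − 1 − 2^{−β}) / (∑_{i=1}^{Δ} i^{−(β−1)}) ≥ (ζ(β) − 1 − 2^{−β}) / ζ(β−1), where ζ(s) = ∑_{n=1}^{∞} n^{−s} denotes the Riemann zeta function evaluated at the real number s > 1. -/

import Mathlib

noncomputable def zetaReal (s : ℝ) : ℝ := ∑' n : ℕ, ((n : ℝ) + 1) ^ (-s)

lemma zsummable (s : ℝ) (hs : 1 < s) : Summable (fun n : ℕ => ((n : ℝ) + 1) ^ (-s)) := by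
  have h : Summable (fun n : ℕ => (n : ℝ) ^ (-s)) :=
    Real.summable_nat_rpow.mpr (by linarith)
  have : Summable (fun n : ℕ => (((n + 1 : ℕ) : ℝ)) ^ (-s)) := (summable_nat_add_iff 1).mpr h
  convert this using 2 with n
  push_cast
  try ring_nf

lemma partial_eq (s : ℝ) (Δ : ℕ) :
    ∑ i ∈ Finset.Icc 1 Δ, (i : ℝ) ^ (-s) = ∑ n ∈ Finset.range Δ, ((n : ℝ) + 1) ^ (-s) := by
  rw [← Finset.Ico_add_one_right_eq_Icc, Finset.sum_Ico_eq_sum_range]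
  apply Finset.sum_congr rfl
  intro n _
  push_cast
  ring_nf

theorem stmt_7 (β : ℝ) (hβ : 2 < β) :
    ∃ Δ₀ : ℕ, ∀ Δ : ℕ, Δ₀ ≤ Δ →
      (zetaReal β - 1 - (2 : ℝ) ^ (-β)) / zetaReal (β - 1) ≤
        ((∑ i ∈ Finset.Icc 1 Δ, (i : ℝ) ^ (-β)) - 1 - (2 : ℝ) ^ (-β)) /
          (∑ i ∈ Finset.Icc 1 Δ, (i : ℝ) ^ (-(β - 1))) := by
  have hβ1 : (1:ℝ) < β := by linarith
  have hβ2 : (1:ℝ) < β - 1 := by linarith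
  have hSβ := zsummable β hβ1
  have hS1 := zsummable (β-1) hβ2
  set N : ℝ := zetaReal β - 1 - (2:ℝ)^(-β) with hNdef
  -- N > 0
  have hterm : ∀ n : ℕ, (0:ℝ) < ((n:ℝ)+1) ^ (-β) := fun n =>
    Real.rpow_pos_of_pos (by positivity) _
  have hterm1 : ∀ n : ℕ, (0:ℝ) < ((n:ℝ)+1) ^ (-(β-1)) := fun n =>
    Real.rpow_pos_of_pos (by positivity) _
  have hN : 0 < N := by
    have h3 : ∑ i ∈ Finset.range 3, ((i:ℝ)+1) ^ (-β) ≤ zetaReal β :=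
      Summable.sum_le_tsum _ (fun n _ => (hterm n).le) hSβ
    have : ∑ i ∈ Finset.range 3, ((i:ℝ)+1) ^ (-β)
        = 1 + (2:ℝ)^(-β) + (3:ℝ)^(-β) := by
      simp [Finset.sum_range_succ]
      norm_num [Real.one_rpow]
    have h3pos : (0:ℝ) < (3:ℝ)^(-β) := Real.rpow_pos_of_pos (by norm_num) _
    rw [this] at h3
    simp only [hNdef]
    linarith
  have hD : 0 < zetaReal (β-1) := by
    have h1 : ∑ i ∈ Finset.range 1, ((i:ℝ)+1) ^ (-(β-1)) ≤ zetaReal (β-1) :=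
      Summable.sum_le_tsum _ (fun n _ => (hterm1 n).le) hS1
    simp [Real.one_rpow] at h1
    linarith
  refine ⟨max 1 ⌈zetaReal (β-1) / N⌉₊, fun Δ hΔ => ?_⟩
  have hΔ1 : 1 ≤ Δ := le_trans (le_max_left _ _) hΔ
  have hΔc : zetaReal (β-1) / N ≤ (Δ:ℝ) + 1 := by
    have := le_trans (le_max_right 1 ⌈zetaReal (β-1) / N⌉₊) hΔ
    have h2 := Nat.le_ceil (zetaReal (β-1) / N)
    have : (⌈zetaReal (β-1) / N⌉₊ : ℝ) ≤ (Δ:ℝ) := by exact_mod_cast this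
    linarith
  -- tails
  set tβ : ℝ := ∑' n : ℕ, (((n:ℝ) + Δ) + 1) ^ (-β) with htβdef
  set t1 : ℝ := ∑' n : ℕ, (((n:ℝ) + Δ) + 1) ^ (-(β-1)) with ht1def
  have hsumtailβ : Summable (fun n : ℕ => (((n:ℝ) + Δ) + 1) ^ (-β)) := by
    have : Summable (fun n : ℕ => (((n + Δ : ℕ) : ℝ) + 1) ^ (-β)) := (summable_nat_add_iff Δ).mpr hSβ
    convert this using 2 with n; push_cast; try ring_nf
  have hsumtail1 : Summable (fun n : ℕ => (((n:ℝ) + Δ) + 1) ^ (-(β-1))) := by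
    have : Summable (fun n : ℕ => (((n + Δ : ℕ) : ℝ) + 1) ^ (-(β-1))) := (summable_nat_add_iff Δ).mpr hS1
    convert this using 2 with n; push_cast; try ring_nf
  have hsplit : ∀ (s : ℝ), Summable (fun n : ℕ => ((n : ℝ) + 1) ^ (-s)) →
      (∑ i ∈ Finset.Icc 1 Δ, (i : ℝ) ^ (-s)) + (∑' n : ℕ, (((n:ℝ) + Δ) + 1) ^ (-s))
        = zetaReal s := by
    intro s hs
    rw [partial_eq]
    have := Summable.sum_add_tsum_nat_add Δ hs
    rw [zetaReal, ← this]
    congr 1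
    apply tsum_congr
    intro n
    push_cast
    ring_nf
  have hPβ := hsplit β hSβ
  have hP1 := hsplit (β-1) hS1
  -- tail comparison: tβ ≤ t1 * ((Δ:ℝ)+1)⁻¹
  have hcomp : tβ ≤ t1 * ((Δ:ℝ)+1)⁻¹ := by
    rw [ht1def, ← tsum_mul_right]
    apply Summable.tsum_le_tsum _ hsumtailβ (hsumtail1.mul_right _)
    intro n
    have hx : (0:ℝ) < (n:ℝ) + Δ + 1 := by positivity
    have hxe : ((n:ℝ) + Δ + 1) ^ (-β)
        = ((n:ℝ) + Δ + 1) ^ (-(β-1)) * ((n:ℝ) + Δ + 1)⁻¹ := by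
      rw [← Real.rpow_neg_one ((n:ℝ) + Δ + 1), ← Real.rpow_add hx]
      ring_nf
    rw [hxe]
    apply mul_le_mul_of_nonneg_left _ (Real.rpow_nonneg hx.le _)
    apply inv_anti₀ (by positivity)
    linarith [Nat.cast_nonneg (α := ℝ) n]
  have ht1nn : 0 ≤ t1 := tsum_nonneg (fun n => (Real.rpow_pos_of_pos (by positivity) _).le)
  have htβnn : 0 ≤ tβ := tsum_nonneg (fun n => (Real.rpow_pos_of_pos (by positivity) _).le)
  -- denominator positivity
  have hDΔ : 0 < ∑ i ∈ Finset.Icc 1 Δ, (i : ℝ) ^ (-(β-1)) := by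
    apply Finset.sum_pos
    · intro i hi
      have : 1 ≤ i := (Finset.mem_Icc.mp hi).1
      exact Real.rpow_pos_of_pos (by exact_mod_cast Nat.lt_of_lt_of_le Nat.zero_lt_one this) _
    · exact ⟨1, Finset.mem_Icc.mpr ⟨le_refl 1, hΔ1⟩⟩
  rw [div_le_div_iff₀ hD hDΔ]
  -- goal: N * DΔ ≤ NΔ * ζ(β-1), where partials = ζ - tail
  have keys : zetaReal (β-1) * tβ ≤ N * t1 := by
    have h1 : zetaReal (β-1) * tβ ≤ zetaReal (β-1) * (t1 * ((Δ:ℝ)+1)⁻¹) :=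
      mul_le_mul_of_nonneg_left hcomp hD.le
    have h2 : zetaReal (β-1) * ((Δ:ℝ)+1)⁻¹ ≤ N := by
      rw [div_le_iff₀ hN] at hΔc
      have hpos : (0:ℝ) < (Δ:ℝ)+1 := by positivity
      rw [mul_inv_le_iff₀ hpos]  -- may need different lemma name
      nlinarith
    nlinarith
  nlinarith [hPβ, hP1]
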